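/- Let 𝔤 be a Lie ring acting on an abelian group A, and suppose 𝔥 ≤ 𝔤 is a finite-index Lie subring. If f is a partial homomorphism from 𝔤 to A whose restriction to 𝔥 ∩ Dom(f) differs from the inner derivation d(a) (g ↦ g·a) by a map with finite image, then f differs from d(a) by a map with finite image on all of Dom(f) ∩ (finite-index subgroup); i.e., the restriction map res: H̃¹(𝔤, A) → H̃¹(𝔥, A) is injective. -/

import Mathlib

/-- A partial homomorphism from `G` to `A`: a homomorphism defined on a
finite-index subgroup of `G`. -/
structure PartialHom (G A : Type*) [AddCommGroup G] [AddCommGroup A] where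
  dom : AddSubgroup G
  finiteIndex : dom.index ≠ 0
  toFun : G → A
  map_add' : ∀ x ∈ dom, ∀ y ∈ dom, toFun (x + y) = toFun x + toFun y

/-- If `𝔥` is a finite-index Lie subring of `𝔤` and the partial homomorphism `f`
differs from the inner derivation `d(a) : g ↦ g·a` by a map with finite image on
`𝔥 ∩ Dom f`, then `f` differs from `d(a)` by a map with finite image on all of
`Dom f`; i.e. the restriction map `res : H̃¹(𝔤, A) → H̃¹(𝔥, A)` is injective. -/
theorem res_injective {L A : Type*} [LieRing L] [AddCommGroup A] [LieRingModule L A]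
    (h : AddSubgroup L) (hsub : ∀ x ∈ h, ∀ y ∈ h, ⁅x, y⁆ ∈ h) (hfin : h.index ≠ 0)
    (f : PartialHom L A) (a : A)
    (hres : Set.Finite ((fun x => f.toFun x - ⁅x, a⁆) ''
      ((h ⊓ f.dom : AddSubgroup L) : Set L))) :
    Set.Finite ((fun x => f.toFun x - ⁅x, a⁆) '' ((f.dom : AddSubgroup L) : Set L)) := by
  set g : L → A := fun x => f.toFun x - ⁅x, a⁆ with hg
  have gadd : ∀ x ∈ f.dom, ∀ y ∈ f.dom, g (x + y) = g x + g y := by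
    intro x hx y hy
    simp only [hg, f.map_add' x hx y hy, add_lie]
    abel
  -- the subgroup h ∩ dom inside dom has finite index
  set H' : AddSubgroup f.dom := h.addSubgroupOf f.dom with hH'
  have hrel : H'.index ≠ 0 := by
    have : h.relIndex f.dom ∣ h.index := AddSubgroup.relIndex_dvd_index_of_normal h f.dom
    intro h0
    exact hfin (Nat.eq_zero_of_zero_dvd (h0 ▸ this))
  haveI : Finite (f.dom ⧸ H') := Nat.finite_of_card_ne_zero hrel
  -- cover the image by translates of the finite image on h ∩ dom
  have hfinU : (⋃ q : f.dom ⧸ H', (fun s => g ((q.out : f.dom) : L) + s) ''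
      (g '' ((h ⊓ f.dom : AddSubgroup L) : Set L))).Finite :=
    Set.finite_iUnion fun q => hres.image _
  apply Set.Finite.subset hfinU
  rintro y ⟨x, hx, rfl⟩
  set x' : f.dom := ⟨x, hx⟩ with hx'
  set q : f.dom ⧸ H' := QuotientAddGroup.mk x' with hq
  set r : f.dom := q.out with hr
  have hqr : (QuotientAddGroup.mk r : f.dom ⧸ H') = QuotientAddGroup.mk x' := by
    rw [hr, hq]; exact QuotientAddGroup.out_eq' _
  have hmem : -r + x' ∈ H' := (QuotientAddGroup.eq (s := H')).mp hqr
  have hmemh : x - (r : L) ∈ h := by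
    have := hmem
    rw [hH', AddSubgroup.mem_addSubgroupOf] at this
    simpa [neg_add_eq_sub] using this
  have hmemd : x - (r : L) ∈ f.dom := sub_mem hx r.2
  refine Set.mem_iUnion.mpr ⟨q, ⟨g (x - (r : L)), ⟨x - (r : L), ⟨hmemh, hmemd⟩, rfl⟩, ?_⟩⟩
  have : g ((r : L) + (x - (r : L))) = g (r : L) + g (x - (r : L)) :=
    gadd _ r.2 _ hmemd
  rw [← hr]
  simpa using this.symm
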